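/- arXiv:math/0406337 — 2 statements merged into one kernel-verified Lean document; each statement's English description precedes it below -/
import Mathlib

section
/- For every natural number n ≥ 1 and every real number x with |x| < 1, the series ∑_{m=0}^{∞} x^m/(m+1/2) and ∑_{k=0}^{∞} x^k · t_k(n-1)/(k+n/2) both converge, and (∑_{m=0}^{∞} x^m/(m+1/2))^n = n! · ∑_{k=0}^{∞} x^k · t_k(n-1)/(k+n/2). -/
noncomputable def t : ℕ → ℕ → ℝ
  | _, 0 => 1
  | k, n + 1 => ∑ m ∈ Finset.range (k + 1), t m n / ((m : ℝ) + ((n : ℝ) + 1) / 2)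

open Finset
lemma t_nonneg (n k : ℕ) : 0 ≤ t k n := by
  induction n generalizing k with
  | zero => simp [t]
  | succ n ih =>
    rw [t]
    refine Finset.sum_nonneg fun m _ => div_nonneg (ih m) (by positivity)

lemma t_le (n k : ℕ) : t k n ≤ (2 * ((k : ℝ) + 1)) ^ n := by
  induction n generalizing k with
  | zero => simp [t]
  | succ n ih =>
    rw [t]
    have hb : ∀ m ∈ range (k + 1),
        t m n / ((m : ℝ) + ((n : ℝ) + 1) / 2) ≤ 2 * (2 * ((k : ℝ) + 1)) ^ n := by
      intro m hm
      have hm' : (m : ℝ) ≤ k := by exact_mod_cast Nat.lt_succ_iff.mp (mem_range.mp hm)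
      have h1 : t m n ≤ (2 * ((m : ℝ) + 1)) ^ n := ih m
      have h2 : (2 * ((m : ℝ) + 1)) ^ n ≤ (2 * ((k : ℝ) + 1)) ^ n := by
        apply pow_le_pow_left₀ (by positivity) (by linarith)
      have hd : (1 : ℝ) / 2 ≤ (m : ℝ) + ((n : ℝ) + 1) / 2 := by
        have : (0 : ℝ) ≤ m := Nat.cast_nonneg m
        have : (0 : ℝ) ≤ n := Nat.cast_nonneg n
        linarith
      have ht0 : 0 ≤ t m n := t_nonneg n m
      rw [div_le_iff₀ (by linarith)]
      nlinarith [pow_nonneg (by positivity : (0:ℝ) ≤ 2 * ((k:ℝ)+1)) n]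
    calc ∑ m ∈ range (k + 1), t m n / ((m : ℝ) + ((n : ℝ) + 1) / 2)
        ≤ ∑ _m ∈ range (k + 1), 2 * (2 * ((k : ℝ) + 1)) ^ n := Finset.sum_le_sum hb
      _ = ((k : ℝ) + 1) * (2 * (2 * ((k : ℝ) + 1)) ^ n) := by
          rw [Finset.sum_const, card_range, nsmul_eq_mul]; push_cast; ring
      _ = (2 * ((k : ℝ) + 1)) ^ (n + 1) := by ring

lemma triangle {M : Type*} [AddCommMonoid M] (k : ℕ) (f : ℕ → ℕ → M) :
    (∑ j ∈ range (k + 1), ∑ m ∈ range (k + 1 - j), f j m) =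
      ∑ i ∈ range (k + 1), ∑ j ∈ range (i + 1), f j (i - j) := by
  induction k with
  | zero => simp
  | succ k ih =>
    have h1 : ∀ j ∈ range (k + 2), ∑ m ∈ range (k + 2 - j), f j m
        = ∑ m ∈ range (k + 1 - j), f j m + f j (k + 1 - j) := by
      intro j hj
      have hj' : j ≤ k + 1 := Nat.lt_succ_iff.mp (mem_range.mp hj)
      have h2 : k + 2 - j = (k + 1 - j) + 1 := by omega
      rw [h2, sum_range_succ]
    rw [sum_congr rfl h1, sum_add_distrib,
      sum_range_succ (fun j => ∑ m ∈ range (k + 1 - j), f j m)]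
    simp only [Nat.sub_self, range_zero, sum_empty, add_zero]
    rw [ih, sum_range_succ (fun i => ∑ j ∈ range (i + 1), f j (i - j)) (k + 1)]

lemma M_of_L (n : ℕ)
    (hL : ∀ k, ∑ j ∈ range (k + 1), 1 / ((j : ℝ) + 1 / 2) * t (k - j) n
        = ((n : ℝ) + 1) * t k (n + 1)) (k : ℕ) :
    ∑ j ∈ range (k + 1),
        1 / ((j : ℝ) + 1 / 2) * (t (k - j) n / (((k - j : ℕ) : ℝ) + ((n : ℝ) + 1) / 2))
      = ((n : ℝ) + 2) * t k (n + 1) / ((k : ℝ) + ((n : ℝ) + 2) / 2) := by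
  have hD : (0 : ℝ) < (k : ℝ) + ((n : ℝ) + 2) / 2 := by positivity
  have key : ∀ j ∈ range (k + 1),
      1 / ((j : ℝ) + 1 / 2) * (t (k - j) n / (((k - j : ℕ) : ℝ) + ((n : ℝ) + 1) / 2))
        = 1 / ((k : ℝ) + ((n : ℝ) + 2) / 2) * (1 / ((j : ℝ) + 1 / 2) * t (k - j) n)
          + 1 / ((k : ℝ) + ((n : ℝ) + 2) / 2)
              * (t (k - j) n / (((k - j : ℕ) : ℝ) + ((n : ℝ) + 1) / 2)) := by
    intro j hj
    have hj' : j ≤ k := Nat.lt_succ_iff.mp (mem_range.mp hj)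
    have hjk : (j : ℝ) ≤ (k : ℝ) := Nat.cast_le.mpr hj'
    rw [Nat.cast_sub hj']
    have hn0 : (0 : ℝ) ≤ (n : ℝ) := Nat.cast_nonneg n
    have hp : ((j : ℝ) + 1 / 2) ≠ 0 := by positivity
    have hq : ((k : ℝ) - (j : ℝ) + ((n : ℝ) + 1) / 2) ≠ 0 := by
      have h0 : (0 : ℝ) < (k : ℝ) - (j : ℝ) + ((n : ℝ) + 1) / 2 := by linarith
      linarith
    have field_id : ∀ a p q : ℝ, p ≠ 0 → q ≠ 0 → p + q ≠ 0 →
        1 / p * (a / q) = 1 / (p + q) * (1 / p * a) + 1 / (p + q) * (a / q) := by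
      intro a p q hp hq hpq
      field_simp
      ring
    have hsum : ((j : ℝ) + 1 / 2) + ((k : ℝ) - (j : ℝ) + ((n : ℝ) + 1) / 2)
        = (k : ℝ) + ((n : ℝ) + 2) / 2 := by ring
    have := field_id (t (k - j) n) ((j : ℝ) + 1 / 2)
      ((k : ℝ) - (j : ℝ) + ((n : ℝ) + 1) / 2) hp hq (by rw [hsum]; exact ne_of_gt hD)
    rw [hsum] at this
    exact this
  rw [sum_congr rfl key, sum_add_distrib, ← mul_sum, ← mul_sum, hL k]
  have hrefl : ∑ j ∈ range (k + 1), t (k - j) n / (((k - j : ℕ) : ℝ) + ((n : ℝ) + 1) / 2)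
      = t k (n + 1) := by
    have h := Finset.sum_range_reflect
      (fun m => t m n / ((m : ℝ) + ((n : ℝ) + 1) / 2)) (k + 1)
    rw [t]
    simpa using h
  rw [hrefl]
  field_simp
  ring

lemma L_all (n : ℕ) : ∀ k, ∑ j ∈ range (k + 1), 1 / ((j : ℝ) + 1 / 2) * t (k - j) n
    = ((n : ℝ) + 1) * t k (n + 1) := by
  induction n with
  | zero =>
    intro k
    have h1 : ∀ j ∈ range (k + 1), 1 / ((j : ℝ) + 1 / 2) * t (k - j) 0
        = t j 0 / ((j : ℝ) + (((0 : ℕ) : ℝ) + 1) / 2) := by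
      intro j hj
      simp [t]
    calc ∑ j ∈ range (k + 1), 1 / ((j : ℝ) + 1 / 2) * t (k - j) 0
        = ∑ j ∈ range (k + 1), t j 0 / ((j : ℝ) + (((0 : ℕ) : ℝ) + 1) / 2) := sum_congr rfl h1
      _ = t k 1 := by rw [t]
      _ = ((0 : ℕ) + 1 : ℝ) * t k (0 + 1) := by norm_num
  | succ n ih =>
    intro k
    have hM := M_of_L n ih
    calc ∑ j ∈ range (k + 1), 1 / ((j : ℝ) + 1 / 2) * t (k - j) (n + 1)
        = ∑ j ∈ range (k + 1), ∑ m ∈ range (k + 1 - j),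
            1 / ((j : ℝ) + 1 / 2) * (t m n / ((m : ℝ) + ((n : ℝ) + 1) / 2)) := by
          refine sum_congr rfl fun j hj => ?_
          have hj' : j ≤ k := Nat.lt_succ_iff.mp (mem_range.mp hj)
          rw [t, mul_sum, show k - j + 1 = k + 1 - j from by omega]
      _ = ∑ i ∈ range (k + 1), ∑ j ∈ range (i + 1),
            1 / ((j : ℝ) + 1 / 2) * (t (i - j) n / (((i - j : ℕ) : ℝ) + ((n : ℝ) + 1) / 2)) :=
          triangle k _
      _ = ∑ i ∈ range (k + 1), ((n : ℝ) + 2) * (t i (n + 1) / ((i : ℝ) + ((n : ℝ) + 2) / 2)) := by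
          refine sum_congr rfl fun i _ => ?_
          rw [hM i, mul_div_assoc]
      _ = ((n : ℝ) + 2) * ∑ i ∈ range (k + 1), t i (n + 1) / ((i : ℝ) + ((n : ℝ) + 2) / 2) := by
          rw [mul_sum]
      _ = (((n + 1 : ℕ) : ℝ) + 1) * t k (n + 1 + 1) := by
          conv_rhs => rw [t]
          have hc : ((n + 1 : ℕ) : ℝ) + 1 = (n : ℝ) + 2 := by push_cast; ring
          rw [hc]

lemma summable_aux (p : ℕ) {r : ℝ} (hr0 : 0 ≤ r) (hr : r < 1) :
    Summable fun k : ℕ => ((k : ℝ) + 1) ^ p * r ^ k := by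
  have h1 : Summable fun k : ℕ => (k : ℝ) ^ p * r ^ k := by
    simpa using summable_pow_mul_geometric_of_norm_lt_one p
      (by rwa [Real.norm_eq_abs, abs_of_nonneg hr0] : ‖r‖ < 1)
  have h2 : Summable fun k : ℕ => r ^ k := summable_geometric_of_lt_one hr0 hr
  refine Summable.of_nonneg_of_le (fun k => by positivity) (fun k => ?_)
    ((h1.mul_left (2 ^ p)).add (h2.mul_left (2 ^ p)))
  have hk : ((k : ℝ) + 1) ^ p ≤ 2 ^ p * (k : ℝ) ^ p + 2 ^ p := by
    rcases Nat.eq_zero_or_pos k with h | h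
    · subst h
      have ha : (0:ℝ) ≤ 2 ^ p * (0:ℝ) ^ p := by positivity
      have hb : (1:ℝ) ≤ 2 ^ p := one_le_pow₀ (by norm_num)
      simp only [Nat.cast_zero, zero_add, one_pow]
      linarith
    · have h1' : ((k : ℝ) + 1) ^ p ≤ (2 * (k : ℝ)) ^ p := by
        apply pow_le_pow_left₀ (by positivity)
        have : (1 : ℝ) ≤ k := by exact_mod_cast h
        linarith
      have : (0:ℝ) ≤ 2 ^ p := by positivity
      calc ((k : ℝ) + 1) ^ p ≤ (2 * (k:ℝ)) ^ p := h1'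
        _ = 2 ^ p * (k:ℝ) ^ p := by rw [mul_pow]
        _ ≤ 2 ^ p * (k:ℝ) ^ p + 2 ^ p := by linarith
  have hrk : (0:ℝ) ≤ r ^ k := by positivity
  calc ((k : ℝ) + 1) ^ p * r ^ k ≤ (2 ^ p * (k : ℝ) ^ p + 2 ^ p) * r ^ k := by
        exact mul_le_mul_of_nonneg_right hk hrk
    _ = 2 ^ p * ((k:ℝ) ^ p * r ^ k) + 2 ^ p * r ^ k := by ring


/-- Corollary to **Theorem 3**: for `n ≥ 1` and `|x| < 1`, the series
`∑_{m=0}^{∞} x^m/(m+1/2)` and `∑_{k=0}^{∞} x^k · t_k(n-1)/(k+n/2)` both converge,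
and `(∑_{m=0}^{∞} x^m/(m+1/2))^n = n! · ∑_{k=0}^{∞} x^k · t_k(n-1)/(k+n/2)`. -/
theorem arctan_power_theorem3_corollary (n : ℕ) (hn : 1 ≤ n) (x : ℝ) (hx : |x| < 1) :
    Summable (fun m : ℕ => x ^ m / ((m : ℝ) + 1 / 2)) ∧
      Summable (fun k : ℕ => x ^ k * t k (n - 1) / ((k : ℝ) + (n : ℝ) / 2)) ∧
      (∑' m : ℕ, x ^ m / ((m : ℝ) + 1 / 2)) ^ n =
        (Nat.factorial n : ℝ) *
          ∑' k : ℕ, x ^ k * t k (n - 1) / ((k : ℝ) + (n : ℝ) / 2) := by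
  obtain ⟨N, rfl⟩ : ∃ N, n = N + 1 := ⟨n - 1, (Nat.succ_pred_eq_of_pos hn).symm⟩
  have hr0 : (0 : ℝ) ≤ |x| := abs_nonneg x
  -- summability of the geometric-type series
  have ha_norm : Summable fun m : ℕ => ‖x ^ m / ((m : ℝ) + 1 / 2)‖ := by
    refine Summable.of_nonneg_of_le (fun m => norm_nonneg _) (fun m => ?_)
      ((summable_geometric_of_lt_one hr0 hx).mul_left 2)
    have hd : (0 : ℝ) < (m : ℝ) + 1 / 2 := by positivity
    rw [Real.norm_eq_abs, abs_div, abs_pow, abs_of_pos hd, div_le_iff₀ hd]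
    have h1 : (0 : ℝ) ≤ |x| ^ m := by positivity
    have h2 : (1 : ℝ) / 2 ≤ (m : ℝ) + 1 / 2 := by
      have : (0 : ℝ) ≤ (m : ℝ) := Nat.cast_nonneg m
      linarith
    nlinarith
  have hb_norm : ∀ M : ℕ,
      Summable fun k : ℕ => ‖x ^ k * t k M / ((k : ℝ) + ((M : ℝ) + 1) / 2)‖ := by
    intro M
    refine Summable.of_nonneg_of_le (fun k => norm_nonneg _) (fun k => ?_)
      ((summable_aux M hr0 hx).mul_left (2 * 2 ^ M))
    have hd : (0 : ℝ) < (k : ℝ) + ((M : ℝ) + 1) / 2 := by positivity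
    have hd2 : (1 : ℝ) / 2 ≤ (k : ℝ) + ((M : ℝ) + 1) / 2 := by
      have h1 : (0 : ℝ) ≤ (k : ℝ) := Nat.cast_nonneg k
      have h2 : (0 : ℝ) ≤ (M : ℝ) := Nat.cast_nonneg M
      linarith
    have ht0 : 0 ≤ t k M := t_nonneg M k
    have ht1 : t k M ≤ (2 * ((k : ℝ) + 1)) ^ M := t_le M k
    have hxk : (0 : ℝ) ≤ |x| ^ k := by positivity
    rw [Real.norm_eq_abs, abs_div, abs_mul, abs_pow, abs_of_nonneg ht0,
      abs_of_pos hd, div_le_iff₀ hd]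
    have hpow : (2 * ((k : ℝ) + 1)) ^ M = 2 ^ M * ((k : ℝ) + 1) ^ M := mul_pow 2 _ M
    have hpk : (0 : ℝ) ≤ ((k : ℝ) + 1) ^ M := by positivity
    have hP : (0 : ℝ) ≤ 2 ^ M * (((k : ℝ) + 1) ^ M * |x| ^ k) := by positivity
    have hfact : (0 : ℝ) ≤ (2 ^ M * (((k : ℝ) + 1) ^ M * |x| ^ k)) *
        (2 * ((k : ℝ) + ((M : ℝ) + 1) / 2) - 1) := mul_nonneg hP (by linarith)
    calc |x| ^ k * t k M ≤ |x| ^ k * (2 * ((k : ℝ) + 1)) ^ M :=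
          mul_le_mul_of_nonneg_left ht1 hxk
      _ = 2 ^ M * (((k : ℝ) + 1) ^ M * |x| ^ k) := by rw [hpow]; ring
      _ ≤ 2 * 2 ^ M * (((k : ℝ) + 1) ^ M * |x| ^ k) * ((k : ℝ) + ((M : ℝ) + 1) / 2) := by
          nlinarith [hfact]
  -- the main identity by induction
  have hmain : ∀ M : ℕ,
      (∑' m : ℕ, x ^ m / ((m : ℝ) + 1 / 2)) ^ (M + 1) =
        (Nat.factorial (M + 1) : ℝ) *
          ∑' k : ℕ, x ^ k * t k M / ((k : ℝ) + ((M : ℝ) + 1) / 2) := by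
    intro M
    induction M with
    | zero =>
      rw [pow_one, Nat.factorial_one, Nat.cast_one, one_mul]
      refine tsum_congr fun k => ?_
      have : t k 0 = 1 := rfl
      rw [this, mul_one]
      norm_num
    | succ M ih =>
      have hcauchy := tsum_mul_tsum_eq_tsum_sum_range_of_summable_norm ha_norm (hb_norm M)
      have hconv : ∀ k : ℕ,
          (∑ j ∈ range (k + 1), x ^ j / ((j : ℝ) + 1 / 2) *
            (x ^ (k - j) * t (k - j) M / (((k - j : ℕ) : ℝ) + ((M : ℝ) + 1) / 2)))
          = ((M : ℝ) + 2) * (x ^ k * t k (M + 1) / ((k : ℝ) + ((M : ℝ) + 2) / 2)) := by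
        intro k
        have step1 : ∀ j ∈ range (k + 1),
            x ^ j / ((j : ℝ) + 1 / 2) *
              (x ^ (k - j) * t (k - j) M / (((k - j : ℕ) : ℝ) + ((M : ℝ) + 1) / 2))
            = x ^ k * (1 / ((j : ℝ) + 1 / 2) *
                (t (k - j) M / (((k - j : ℕ) : ℝ) + ((M : ℝ) + 1) / 2))) := by
          intro j hj
          have hj' : j ≤ k := Nat.lt_succ_iff.mp (mem_range.mp hj)
          have hxx : x ^ j * x ^ (k - j) = x ^ k := by
            rw [← pow_add, Nat.add_sub_cancel' hj']
          calc x ^ j / ((j : ℝ) + 1 / 2) *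
                (x ^ (k - j) * t (k - j) M / (((k - j : ℕ) : ℝ) + ((M : ℝ) + 1) / 2))
              = (x ^ j * x ^ (k - j)) * (1 / ((j : ℝ) + 1 / 2) *
                  (t (k - j) M / (((k - j : ℕ) : ℝ) + ((M : ℝ) + 1) / 2))) := by ring
            _ = x ^ k * (1 / ((j : ℝ) + 1 / 2) *
                  (t (k - j) M / (((k - j : ℕ) : ℝ) + ((M : ℝ) + 1) / 2))) := by rw [hxx]
        rw [sum_congr rfl step1, ← mul_sum, M_of_L M (L_all M) k]
        rw [mul_div_assoc]
        ring
      have hT : ∑' k : ℕ,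
          (∑ j ∈ range (k + 1), x ^ j / ((j : ℝ) + 1 / 2) *
            (x ^ (k - j) * t (k - j) M / (((k - j : ℕ) : ℝ) + ((M : ℝ) + 1) / 2)))
          = ((M : ℝ) + 2) *
              ∑' k : ℕ, x ^ k * t k (M + 1) / ((k : ℝ) + ((M : ℝ) + 2) / 2) := by
        rw [← tsum_mul_left]
        exact tsum_congr hconv
      have hden : ∀ k : ℕ, (k : ℝ) + (((M + 1 : ℕ) : ℝ) + 1) / 2
          = (k : ℝ) + ((M : ℝ) + 2) / 2 := by
        intro k; push_cast; ring
      have hTT : (∑' k : ℕ, x ^ k * t k (M + 1) / ((k : ℝ) + (((M + 1 : ℕ) : ℝ) + 1) / 2))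
          = ∑' k : ℕ, x ^ k * t k (M + 1) / ((k : ℝ) + ((M : ℝ) + 2) / 2) :=
        tsum_congr fun k => by rw [hden k]
      calc (∑' m : ℕ, x ^ m / ((m : ℝ) + 1 / 2)) ^ (M + 1 + 1)
          = (∑' m : ℕ, x ^ m / ((m : ℝ) + 1 / 2)) ^ (M + 1) *
              (∑' m : ℕ, x ^ m / ((m : ℝ) + 1 / 2)) := pow_succ _ _
        _ = ((Nat.factorial (M + 1) : ℝ) *
              ∑' k : ℕ, x ^ k * t k M / ((k : ℝ) + ((M : ℝ) + 1) / 2)) *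
              (∑' m : ℕ, x ^ m / ((m : ℝ) + 1 / 2)) := by rw [ih]
        _ = (Nat.factorial (M + 1) : ℝ) *
              ((∑' m : ℕ, x ^ m / ((m : ℝ) + 1 / 2)) *
                ∑' k : ℕ, x ^ k * t k M / ((k : ℝ) + ((M : ℝ) + 1) / 2)) := by ring
        _ = (Nat.factorial (M + 1) : ℝ) * (((M : ℝ) + 2) *
              ∑' k : ℕ, x ^ k * t k (M + 1) / ((k : ℝ) + ((M : ℝ) + 2) / 2)) := by
            rw [hcauchy, hT]
        _ = (Nat.factorial (M + 1 + 1) : ℝ) *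
              ∑' k : ℕ, x ^ k * t k (M + 1) / ((k : ℝ) + (((M + 1 : ℕ) : ℝ) + 1) / 2) := by
            rw [hTT, Nat.factorial_succ (M + 1)]
            push_cast
            ring
  refine ⟨ha_norm.of_norm, ?_, ?_⟩
  · have : Summable fun k : ℕ => x ^ k * t k N / ((k : ℝ) + ((N : ℝ) + 1) / 2) :=
      (hb_norm N).of_norm
    simp only [Nat.add_sub_cancel]
    convert this using 2 with k
    push_cast
    ring
  · have := hmain N
    simp only [Nat.add_sub_cancel]
    convert this using 3 with k
    push_cast
    ring
end

section
/- Fix a natural number n ≥ 1 and let f : ℝ → ℝ be defined by f(x) = (arctan(x)/x)^n for x ≠ 0 and f(0) = 1. Then for every natural number m, the (2m)-th iterated derivative of f at 0 equals (−1)^m · n! · (2m)! · t_m(n-1) / (2^n · (m + n/2)). -/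
open PowerSeries Finset

noncomputable def pc : ℕ → ℝ := fun j => if Even j then (-1)^(j/2) / ((j:ℝ)+1) else 0

noncomputable def P : PowerSeries ℝ := PowerSeries.mk pc

noncomputable def c (n j : ℕ) : ℝ := PowerSeries.coeff (R := ℝ) j (P ^ n)

lemma abs_pc_le (j : ℕ) : |pc j| ≤ 1 := by
  unfold pc
  split
  · rw [abs_div, abs_pow, abs_neg, abs_one, one_pow]
    rw [div_le_one (by positivity)]
    rw [abs_of_nonneg (by positivity)]
    linarith [Nat.cast_nonneg (α := ℝ) j]
  · norm_num

lemma c_one (j : ℕ) : c 1 j = pc j := by simp [c, P]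

lemma c_zero (j : ℕ) : c 0 j = if j = 0 then 1 else 0 := by
  simp [c, PowerSeries.coeff_one]

lemma c_zero' (n : ℕ) : c n 0 = 1 := by
  have : (PowerSeries.coeff (R := ℝ) 0) (P ^ n) = (PowerSeries.constantCoeff (R := ℝ)) (P ^ n) := by
    simp [PowerSeries.coeff_zero_eq_constantCoeff]
  rw [c, this, map_pow]
  have : (PowerSeries.constantCoeff (R := ℝ)) P = 1 := by simp [P, pc, ← PowerSeries.coeff_zero_eq_constantCoeff]
  simp [this]

lemma c_succ (n j : ℕ) : c (n+1) j = ∑ p ∈ antidiagonal j, pc p.1 * c n p.2 := by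
  rw [c, pow_succ, mul_comm, PowerSeries.coeff_mul]
  exact Finset.sum_congr rfl fun p _ => by rw [P, PowerSeries.coeff_mk]; rfl

lemma abs_c_le (n j : ℕ) : |c n j| ≤ 2^(n+j) := by
  induction n generalizing j with
  | zero =>
    rw [c_zero]
    split
    · simp only [abs_one]
      exact one_le_pow₀ one_le_two
    · simp only [abs_zero]
      positivity
  | succ n ih =>
    rw [c_succ]
    calc |∑ p ∈ antidiagonal j, pc p.1 * c n p.2| ≤ ∑ p ∈ antidiagonal j, |pc p.1 * c n p.2| :=
          Finset.abs_sum_le_sum_abs _ _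
      _ ≤ ∑ p ∈ antidiagonal j, 2^(n + p.2) := by
          refine Finset.sum_le_sum fun p _ => ?_
          rw [abs_mul]
          calc |pc p.1| * |c n p.2| ≤ 1 * 2^(n+p.2) :=
                mul_le_mul (abs_pc_le _) (ih _) (abs_nonneg _) zero_le_one
            _ = 2^(n+p.2) := one_mul _
      _ ≤ 2^(n+1+j) := by
          rw [Finset.Nat.sum_antidiagonal_eq_sum_range_succ_mk]
          have h1 : ∀ p ∈ range (j+1), (2:ℝ)^(n + (j - p)) = 2^n * 2^(j-p) := fun p _ => pow_add 2 n _
          rw [Finset.sum_congr rfl h1, ← Finset.mul_sum]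
          have h2 : ∑ i ∈ range (j+1), (2:ℝ)^(j-i) = ∑ i ∈ range (j+1), 2^i := by
            rw [← Finset.sum_range_reflect]
            refine Finset.sum_congr rfl fun i hi => ?_
            congr 1
            rw [Finset.mem_range] at hi
            omega
          rw [h2, geom_sum_eq (by norm_num) (j+1)]
          have : ((2:ℝ)^(j+1) - 1)/(2-1) ≤ 2^(j+1) := by
            rw [show (2:ℝ)-1 = 1 by norm_num, div_one]
            linarith [pow_pos (show (0:ℝ)<2 by norm_num) (j+1)]
          calc (2:ℝ)^n * ((2^(j+1)-1)/(2-1)) ≤ 2^n * 2^(j+1) := by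
                apply mul_le_mul_of_nonneg_left this (by positivity)
            _ = 2^(n+1+j) := by rw [← pow_add]; ring_nf

lemma coeff_dXP (j : ℕ) :
    PowerSeries.coeff (R := ℝ) j ((PowerSeries.derivative ℝ) (PowerSeries.X * P)) =
      if Even j then (-1)^(j/2) else 0 := by
  rw [PowerSeries.coeff_derivative, PowerSeries.coeff_succ_X_mul]
  simp only [P, PowerSeries.coeff_mk, pc]
  split
  · field_simp
  · simp

lemma base_ode :
    (1 + PowerSeries.X^2) * (PowerSeries.derivative ℝ) (PowerSeries.X * P) = 1 := by
  ext j
  rw [add_mul, one_mul, map_add]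
  rcases j with _ | _ | j
  · rw [PowerSeries.coeff_X_pow_mul' _ 2 0, coeff_dXP]
    norm_num [PowerSeries.coeff_one]
  · rw [PowerSeries.coeff_X_pow_mul' _ 2 1, coeff_dXP]
    norm_num [PowerSeries.coeff_one, Nat.even_iff]
  · rw [show j+1+1 = j+2 from rfl, PowerSeries.coeff_X_pow_mul _ 2 j, coeff_dXP, coeff_dXP,
      PowerSeries.coeff_one]
    have he : Even (j+2) ↔ Even j := by simp [Nat.even_add]
    have hd : (j+2)/2 = j/2 + 1 := by omega
    by_cases h : Even j
    · rw [if_pos (he.mpr h), if_pos h, if_neg (by omega), hd, pow_succ]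
      ring
    · rw [if_neg (fun hh => h (he.mp hh)), if_neg h, if_neg (by omega)]
      ring

lemma ode (n : ℕ) :
    (1 + PowerSeries.X^2) * (PowerSeries.derivative ℝ) ((PowerSeries.X * P)^(n+1)) =
      (n+1 : ℝ⟦X⟧) * (PowerSeries.X * P)^n := by
  rw [Derivation.leibniz_pow]
  rw [smul_eq_mul, Nat.add_sub_cancel, nsmul_eq_mul]
  push_cast
  calc (1 + PowerSeries.X^2) * ((n+1 : ℝ⟦X⟧) * ((PowerSeries.X * P)^n *
        (PowerSeries.derivative ℝ) (PowerSeries.X * P)))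
      = (n+1 : ℝ⟦X⟧) * (PowerSeries.X * P)^n *
        ((1 + PowerSeries.X^2) * (PowerSeries.derivative ℝ) (PowerSeries.X * P)) := by ring
    _ = (n+1 : ℝ⟦X⟧) * (PowerSeries.X * P)^n := by rw [base_ode, mul_one]

lemma coeff_XP_pow (n k : ℕ) :
    PowerSeries.coeff (R := ℝ) (k + n) ((PowerSeries.X * P)^n) = c n k := by
  rw [mul_pow, PowerSeries.coeff_X_pow_mul]
  rfl

lemma c_rec (n m : ℕ) :
    ((n:ℝ)+2*m+3) * c (n+1) (2*m+2) + ((n:ℝ)+2*m+1) * c (n+1) (2*m) =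
      ((n:ℝ)+1) * c n (2*m+2) := by
  have h := congrArg (PowerSeries.coeff (R := ℝ) (n+2*m+2)) (ode n)
  rw [add_mul, one_mul, map_add] at h
  rw [show n+2*m+2 = (n+2*m)+2 from rfl, PowerSeries.coeff_X_pow_mul _ 2 (n+2*m)] at h
  rw [PowerSeries.coeff_derivative, PowerSeries.coeff_derivative] at h
  have hC : ((n:ℝ⟦X⟧)+1) = PowerSeries.C (R := ℝ) ((n:ℝ)+1) := by
    rw [map_add, map_one, map_natCast]
  have e1 := coeff_XP_pow (n+1) (2*m+2)
  rw [show 2*m+2+(n+1) = n+2*m+2+1 by ring] at e1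
  have e2 := coeff_XP_pow (n+1) (2*m)
  rw [show 2*m+(n+1) = n+2*m+1 by ring] at e2
  have e3 := coeff_XP_pow n (2*m+2)
  rw [show 2*m+2+n = n+2*m+2 by ring] at e3
  rw [e1, e2, hC, PowerSeries.coeff_C_mul, e3] at h
  push_cast at h
  linear_combination h

lemma t_zero' (k : ℕ) : t k 0 = 1 := rfl

lemma t_def (k n : ℕ) : t k (n+1) = ∑ m ∈ Finset.range (k + 1), t m n / ((m : ℝ) + ((n : ℝ) + 1) / 2) := rfl

lemma t_zero (n : ℕ) : t 0 n = 2^n / (Nat.factorial n) := by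
  induction n with
  | zero => simp [t_zero']
  | succ n ih =>
    rw [t_def, Finset.sum_range_one, ih, Nat.factorial_succ]
    have h1 : ((n.factorial : ℝ)) ≠ 0 := Nat.cast_ne_zero.mpr (Nat.factorial_ne_zero _)
    push_cast
    field_simp
    ring

lemma t_succ (k n : ℕ) : t (k+1) (n+1) = t k (n+1) + t (k+1) n / (((k:ℝ)+1) + ((n:ℝ)+1)/2) := by
  rw [t_def, t_def, Finset.sum_range_succ]
  push_cast
  ring

lemma key (n : ℕ) : ∀ m : ℕ, c (n+1) (2*m) =
    (-1)^m * (Nat.factorial (n+1)) * t m n / (2^(n+1) * ((m:ℝ) + ((n:ℝ)+1)/2)) := by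
  induction n with
  | zero =>
    intro m
    rw [c_one]
    simp only [pc, even_two_mul m, if_pos, Nat.mul_div_cancel_left m two_pos]
    rw [t_zero']
    push_cast
    rw [Nat.factorial_one]
    push_cast
    field_simp
    ring
  | succ n ih =>
    intro m
    induction m with
    | zero =>
      rw [mul_zero, c_zero', t_zero, Nat.factorial_succ]
      have h1 : (Nat.factorial (n+1) : ℝ) ≠ 0 := Nat.cast_ne_zero.mpr (Nat.factorial_ne_zero _)
      push_cast
      field_simp
      ring
    | succ m ihm =>
      have hpos : ((n:ℝ)+1+2*m+3) ≠ 0 := by positivity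
      have hrec := c_rec (n+1) m
      push_cast at hrec
      have hA : c (n+1+1) (2*m+2) =
          (((n:ℝ)+1+1) * c (n+1) (2*m+2) - ((n:ℝ)+1+2*m+1) * c (n+1+1) (2*m)) /
            ((n:ℝ)+1+2*m+3) := by
        rw [eq_div_iff hpos]
        linear_combination hrec
      have ih1 := ih (m+1)
      rw [show 2*(m+1) = 2*m+2 by ring] at ih1
      rw [show 2*(m+1) = 2*m+2 by ring, hA, ih1, ihm, t_succ]
      have d1 : ((m:ℝ) + 1 + ((n:ℝ)+1)/2) ≠ 0 := by positivity
      have d2 : ((m:ℝ) + ((n:ℝ)+1+1)/2) ≠ 0 := by positivity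
      have d3 : ((m:ℝ) + 1 + ((n:ℝ)+1+1)/2) ≠ 0 := by positivity
      have d4 : ((m:ℝ) + 1 + ((n:ℝ)+1)/2) ≠ 0 := by positivity
      have hf : (Nat.factorial (n+1+1) : ℝ) = ((n:ℝ)+1+1) * (Nat.factorial (n+1)) := by
        rw [Nat.factorial_succ]; push_cast; ring
      rw [hf]
      push_cast
      field_simp
      ring

noncomputable def g : ℝ → ℝ := fun x => if x = 0 then 1 else Real.arctan x / x

lemma hasSum_g {x : ℝ} (hx : |x| < 1) : HasSum (fun j => pc j * x^j) (g x) := by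
  by_cases hx0 : x = 0
  · subst hx0
    unfold g; rw [if_pos rfl]
    have h0 := hasSum_single (f := fun j => pc j * (0:ℝ)^j) 0 (fun b hb => by simp [zero_pow hb])
    simpa [pc] using h0
  · unfold g; rw [if_neg hx0]
    have h := (Real.hasSum_arctan (x := x) (by rwa [Real.norm_eq_abs])).div_const x
    have hinj : Function.Injective (fun k : ℕ => 2*k) := fun a b hab => by simp only at hab; omega
    refine (hinj.hasSum_iff ?_).mp ?_
    · intro j hj
      have hodd : ¬ Even j := by
        rintro ⟨r, hr⟩
        exact hj ⟨r, show 2*r = j by omega⟩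
      simp [pc, hodd]
    · convert h using 1
      · rfl
      funext k
      simp only [Function.comp_apply]
      have hpck : pc (2*k) = (-1)^k / ((2*k : ℕ) + 1 : ℝ) := by
        simp [pc, even_two_mul, Nat.mul_div_cancel_left]
      rw [hpck]
      have hne : ((2*k : ℕ) + 1 : ℝ) ≠ 0 := by positivity
      push_cast
      rw [pow_succ]
      field_simp

lemma summable_norm_c (n : ℕ) {x : ℝ} (hx : |x| < 1/2) :
    Summable (fun j => ‖c n j * x^j‖) := by
  have h2 : 2*|x| < 1 := by linarith
  have hgeo : Summable (fun j : ℕ => (2:ℝ)^n * (2*|x|)^j) :=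
    (summable_geometric_of_lt_one (by positivity) h2).mul_left _
  refine Summable.of_nonneg_of_le (fun j => norm_nonneg _) (fun j => ?_) hgeo
  rw [norm_mul, norm_pow, Real.norm_eq_abs, Real.norm_eq_abs]
  calc |c n j| * |x|^j ≤ 2^(n+j) * |x|^j := by
        apply mul_le_mul_of_nonneg_right (abs_c_le n j) (by positivity)
    _ = 2^n * (2*|x|)^j := by rw [pow_add, mul_pow]; ring

lemma hasSum_gpow (n : ℕ) {x : ℝ} (hx : |x| < 1/2) :
    HasSum (fun j => c n j * x^j) ((g x)^n) := by
  induction n with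
  | zero =>
    rw [pow_zero]
    have h0 := hasSum_single (f := fun j => c 0 j * x^j) 0
      (fun b hb => by simp [c_zero, hb])
    simpa [c_zero] using h0
  | succ n ih =>
    have hx1 : |x| < 1 := by linarith
    have hgs := hasSum_g hx1
    have hf : Summable fun j => ‖pc j * x^j‖ := by
      refine Summable.of_nonneg_of_le (fun j => norm_nonneg _) (fun j => ?_)
        (summable_geometric_of_lt_one (abs_nonneg x) hx1)
      rw [norm_mul, norm_pow, Real.norm_eq_abs, Real.norm_eq_abs]
      calc |pc j| * |x|^j ≤ 1 * |x|^j :=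
            mul_le_mul_of_nonneg_right (abs_pc_le j) (by positivity)
        _ = |x|^j := one_mul _
    have hgsum := summable_norm_c n hx
    have hprod := tsum_mul_tsum_eq_tsum_sum_antidiagonal_of_summable_norm hf hgsum
    rw [hgs.tsum_eq, ih.tsum_eq] at hprod
    have hsum2 : Summable fun j => c (n+1) j * x^j := (summable_norm_c (n+1) hx).of_norm
    have heq : ∀ j, ∑ kl ∈ Finset.HasAntidiagonal.antidiagonal j,
        (pc kl.1 * x^kl.1) * (c n kl.2 * x^kl.2) = c (n+1) j * x^j := by
      intro j
      rw [c_succ, Finset.sum_mul]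
      refine Finset.sum_congr rfl fun p hp => ?_
      rw [Finset.HasAntidiagonal.mem_antidiagonal] at hp
      rw [← hp, pow_add]; ring
    have hval : (g x) * (g x)^n = ∑' j, c (n+1) j * x^j := by
      rw [hprod]; exact tsum_congr heq
    have := hsum2.hasSum
    rw [← hval] at this
    rw [pow_succ, mul_comm]
    exact this

/-- Equation (19) of the paper: for `f(x) = (arctan(x)/x)^n` (with `f(0) = 1`),
the `(2m)`-th derivative of `f` at `0` equals
`(−1)^m · n! · (2m)! · t_m(n-1) / (2^n · (m + n/2))`. -/
theorem arctan_power_derivatives (n : ℕ) (hn : 1 ≤ n)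
    (f : ℝ → ℝ) (hf : ∀ x : ℝ, f x = if x = 0 then 1 else (Real.arctan x / x) ^ n)
    (m : ℕ) :
    iteratedDeriv (2 * m) f 0 =
      (-1 : ℝ) ^ m * (Nat.factorial n : ℝ) * (Nat.factorial (2 * m) : ℝ) *
        t m (n - 1) / (2 ^ n * ((m : ℝ) + (n : ℝ) / 2)) := by
  obtain ⟨k, rfl⟩ : ∃ k, n = k + 1 := ⟨n - 1, by omega⟩
  have hfg : ∀ x, f x = (g x)^(k+1) := by
    intro x
    rw [hf]
    unfold g
    split
    · simp
    · rfl
  set q : FormalMultilinearSeries ℝ ℝ ℝ :=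
    FormalMultilinearSeries.ofScalars ℝ (fun j => c (k+1) j) with hq
  have hball : HasFPowerSeriesOnBall f q 0 ((1/2 : NNReal) : ENNReal) := by
    refine ⟨?_, by norm_num, ?_⟩
    · apply FormalMultilinearSeries.le_radius_of_bound _ ((2:ℝ)^(k+1))
      intro j
      rw [hq, FormalMultilinearSeries.ofScalars_norm, Real.norm_eq_abs]
      have hc : ((1/2 : NNReal) : ℝ) = (1/2 : ℝ) := by norm_num
      rw [hc]
      calc |c (k+1) j| * (1/2 : ℝ)^j ≤ 2^((k+1)+j) * (1/2)^j :=
            mul_le_mul_of_nonneg_right (abs_c_le _ _) (by positivity)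
        _ = 2^(k+1) := by
            rw [pow_add, mul_assoc, ← mul_pow]
            norm_num
    · intro y hy
      rw [mem_emetric_ball_zero_iff] at hy
      have hy2 := ENNReal.coe_lt_coe.mp hy
      have hy' : |y| < 1/2 := by
        have : (‖y‖₊ : ℝ) < ((1/2 : NNReal) : ℝ) := NNReal.coe_lt_coe.mpr hy2
        rw [coe_nnnorm, Real.norm_eq_abs] at this
        simpa using this
      have hs := hasSum_gpow (k+1) hy'
      have hfy : f (0 + y) = (g y)^(k+1) := by rw [zero_add, hfg]
      rw [hfy]
      convert hs using 1
      · rfl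
      funext j
      rw [hq, FormalMultilinearSeries.ofScalars_apply_eq, smul_eq_mul]
  have h1 := hball.factorial_smul 1 (2*m)
  rw [iteratedDeriv_eq_iteratedFDeriv, ← h1, hq,
    FormalMultilinearSeries.ofScalars_apply_eq]
  simp only [smul_eq_mul, one_pow, mul_one, nsmul_eq_mul]
  rw [key k m]
  simp only [Nat.add_sub_cancel]
  push_cast
  ring
end
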